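/- Let ν ∈ (0,1), let 0 = t_0 < t_1 < ⋯ < t_N = T be an arbitrary mesh with steps τ_k = t_k − t_{k−1}, let A^{(n)}_{n−k} = (1/τ_k) ∫_{t_{k−1}}^{t_k} (t_n − s)^{−ν}/Γ(1−ν) ds, and let the real numbers P^{(n)}_{n−j} (1 ≤ j ≤ n ≤ N) satisfy the complementary identity ∑_{j=k}^n P^{(n)}_{n−j} A^{(j)}_{j−k} = 1 for all 1 ≤ k ≤ n ≤ N. Then 0 ≤ P^{(n)}_{n−j} ≤ Γ(2−ν) τ_j^ν for all 1 ≤ j ≤ n ≤ N. -/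

import Mathlib

open MeasureTheory

/-- The L1 coefficients `A^{(n)}_{n-k} = (1/τ_k) ∫_{t_{k-1}}^{t_k} (t_n - s)^{-ν}/Γ(1-ν) ds`. -/
noncomputable def L1coeff (ν : ℝ) (t : ℕ → ℝ) (n k : ℕ) : ℝ :=
  (t k - t (k - 1))⁻¹ * ∫ s in (t (k - 1))..(t k), (t n - s) ^ (-ν) / Real.Gamma (1 - ν)

/-- Closed form for the generic L1-type average. -/
lemma L1_eval_aux {ν : ℝ} (hν1 : ν < 1) (a b c : ℝ) :
    (b - a)⁻¹ * ∫ s in a..b, (c - s) ^ (-ν) / Real.Gamma (1 - ν) =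
      ((c - a) ^ (1 - ν) - (c - b) ^ (1 - ν)) / ((b - a) * ((1 - ν) * Real.Gamma (1 - ν))) := by
  have hsub := intervalIntegral.integral_comp_sub_left (a := a) (b := b)
    (fun u : ℝ => u ^ (-ν)) c
  rw [intervalIntegral.integral_div, hsub,
    integral_rpow (Or.inl (by linarith : (-1 : ℝ) < -ν)),
    show -ν + 1 = 1 - ν by ring]
  simp only [div_eq_mul_inv, mul_inv]
  ring

/-- Slope inequality for the concave function `x ↦ x ^ p`, `0 < p < 1`. -/
lemma rpow_slope_anti {p : ℝ} (hp0 : 0 < p) (hp1 : p < 1) {x y z : ℝ}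
    (hx : 0 ≤ x) (hxy : x < y) (hyz : y < z) :
    (z ^ p - y ^ p) / (z - y) ≤ (y ^ p - x ^ p) / (y - x) :=
  (Real.concaveOn_rpow hp0.le hp1.le).slope_anti_adjacent hx
    (le_trans hx (le_of_lt (hxy.trans hyz))) hxy hyz

/-- Bounds for the discrete complementary convolution kernels:
if `∑_{j=k}^n P^{(n)}_{n-j} A^{(j)}_{j-k} = 1` for `1 ≤ k ≤ n ≤ N`, then
`0 ≤ P^{(n)}_{n-j} ≤ Γ(2-ν) τ_j^ν`.  Here `P n j` denotes `P^{(n)}_{n-j}`. -/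
theorem complementary_kernel_bounds
    (ν T : ℝ) (hν : ν ∈ Set.Ioo (0 : ℝ) 1) (N : ℕ) (hN : 0 < N)
    (t : ℕ → ℝ) (ht0 : t 0 = 0) (htN : t N = T)
    (hmono : ∀ k < N, t k < t (k + 1))
    (P : ℕ → ℕ → ℝ)
    (hP : ∀ n k, 1 ≤ k → k ≤ n → n ≤ N →
      ∑ j ∈ Finset.Icc k n, P n j * L1coeff ν t j k = 1)
    (n j : ℕ) (h1j : 1 ≤ j) (hjn : j ≤ n) (hnN : n ≤ N) :
    0 ≤ P n j ∧ P n j ≤ Real.Gamma (2 - ν) * (t j - t (j - 1)) ^ ν := by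
  obtain ⟨hν0, hν1⟩ := hν
  set p : ℝ := 1 - ν with hp
  have hp0 : 0 < p := by simp only [hp]; linarith
  have hp1 : p < 1 := by simp only [hp]; linarith
  have hΓpos : 0 < Real.Gamma (1 - ν) := Real.Gamma_pos_of_pos (by linarith)
  set G : ℝ := (1 - ν) * Real.Gamma (1 - ν) with hG
  have hGpos : 0 < G := mul_pos (by linarith) hΓpos
  -- strict monotonicity of the mesh
  have tlt : ∀ a b : ℕ, a < b → b ≤ N → t a < t b := by
    intro a b
    induction b with
    | zero => omega
    | succ b ih =>
      intro hab hbN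
      have hb : t b < t (b + 1) := hmono b (by omega)
      rcases Nat.lt_succ_iff_lt_or_eq.mp hab with h | h
      · exact (ih h (by omega)).trans hb
      · subst h; exact hb
  -- closed form for the coefficients
  have Aval : ∀ i k : ℕ, 1 ≤ k → k ≤ i → i ≤ N →
      L1coeff ν t i k =
        ((t i - t (k - 1)) ^ p - (t i - t k) ^ p) / ((t k - t (k - 1)) * G) := by
    intro i k hk1 hki hiN
    simp only [L1coeff, hp, hG]
    exact L1_eval_aux hν1 (t (k - 1)) (t k) (t i)
  -- positivity
  have Apos : ∀ i k : ℕ, 1 ≤ k → k ≤ i → i ≤ N → 0 < L1coeff ν t i k := by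
    intro i k hk1 hki hiN
    rw [Aval i k hk1 hki hiN]
    have hab : t (k - 1) < t k := tlt (k - 1) k (by omega) (le_trans hki hiN)
    have hbc : t k ≤ t i := by
      rcases eq_or_lt_of_le hki with h | h
      · subst h; exact le_rfl
      · exact (tlt k i h hiN).le
    have hnum : (t i - t k) ^ p < (t i - t (k - 1)) ^ p :=
      Real.rpow_lt_rpow (by linarith) (by linarith) hp0
    have hden : 0 < (t k - t (k - 1)) * G := mul_pos (by linarith) hGpos
    exact div_pos (by linarith) hden
  -- monotonicity in the second index
  have Amono : ∀ i k : ℕ, 1 ≤ k → k + 1 ≤ i → i ≤ N →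
      L1coeff ν t i k ≤ L1coeff ν t i (k + 1) := by
    intro i k hk1 hki hiN
    rw [Aval i k hk1 (by omega) hiN, Aval i (k + 1) (by omega) hki hiN]
    simp only [Nat.add_sub_cancel]
    set x := t i - t (k + 1) with hx
    set y := t i - t k with hy
    set z := t i - t (k - 1) with hz
    have h1 : t k < t (k + 1) := tlt k (k + 1) (by omega) (le_trans hki hiN)
    have h2 : t (k - 1) < t k := tlt (k - 1) k (by omega) (by omega)
    have h3 : t (k + 1) ≤ t i := by
      rcases eq_or_lt_of_le hki with h | h
      · subst h; exact le_rfl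
      · exact (tlt (k + 1) i h hiN).le
    have hx0 : 0 ≤ x := by simp only [hx]; linarith
    have hxy : x < y := by simp only [hx, hy]; linarith
    have hyz : y < z := by simp only [hy, hz]; linarith
    have hslope := rpow_slope_anti hp0 hp1 hx0 hxy hyz
    have hzy : t k - t (k - 1) = z - y := by simp only [hy, hz]; ring
    have hyx : t (k + 1) - t k = y - x := by simp only [hx, hy]; ring
    rw [hzy, hyx]
    have h := div_le_div_of_nonneg_right hslope hGpos.le
    rwa [div_div, div_div] at h
  have h1n : 1 ≤ n := le_trans h1j hjn
  -- diagonal coefficient: positivity of P n n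
  have diag : 0 ≤ P n n := by
    have h := hP n n h1n le_rfl hnN
    rw [Finset.Icc_self, Finset.sum_singleton] at h
    have hA := Apos n n h1n le_rfl hnN
    nlinarith
  -- splitting of the sum
  have hsplit : ∀ k : ℕ, 1 ≤ k → k ≤ n →
      P n k * L1coeff ν t k k + ∑ i ∈ Finset.Ioc k n, P n i * L1coeff ν t i k = 1 := by
    intro k hk1 hkn
    have h := hP n k hk1 hkn hnN
    rw [← h, ← Finset.add_sum_erase _ _ (Finset.mem_Icc.mpr ⟨le_rfl, hkn⟩),
      Finset.Icc_erase_left]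
  -- nonnegativity by downward induction
  have key : ∀ m : ℕ, ∀ k : ℕ, 1 ≤ k → k ≤ n → n ≤ k + m → 0 ≤ P n k := by
    intro m
    induction m with
    | zero =>
      intro k hk1 hkn hle
      have hk : k = n := by omega
      rw [hk]; exact diag
    | succ m ih =>
      intro k hk1 hkn hle
      rcases eq_or_lt_of_le hkn with heq | hlt
      · rw [heq]; exact diag
      · have h1 := hsplit k hk1 hkn
        have h2 := hP n (k + 1) (by omega) hlt hnN
        rw [Finset.Icc_add_one_left_eq_Ioc] at h2
        have hsum : P n k * L1coeff ν t k k =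
            ∑ i ∈ Finset.Ioc k n, P n i * (L1coeff ν t i (k + 1) - L1coeff ν t i k) := by
          simp only [mul_sub, Finset.sum_sub_distrib]
          linarith
        have hsum_nonneg : 0 ≤ P n k * L1coeff ν t k k := by
          rw [hsum]
          refine Finset.sum_nonneg fun i hi => ?_
          obtain ⟨hki, hin⟩ := Finset.mem_Ioc.mp hi
          refine mul_nonneg (ih i (by omega) hin (by omega)) ?_
          exact sub_nonneg.mpr (Amono i k hk1 hki (le_trans hin hnN))
        have hA := Apos k k hk1 le_rfl (le_trans hkn hnN)
        nlinarith
  have hPj : 0 ≤ P n j := key n j h1j hjn (by omega)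
  refine ⟨hPj, ?_⟩
  -- upper bound
  have hjN : j ≤ N := le_trans hjn hnN
  have hAjj := Apos j j h1j le_rfl hjN
  have hone : P n j * L1coeff ν t j j ≤ 1 := by
    rw [← hP n j h1j hjn hnN]
    refine Finset.single_le_sum (f := fun i => P n i * L1coeff ν t i j)
      (fun i hi => ?_) (Finset.mem_Icc.mpr ⟨le_rfl, hjn⟩)
    obtain ⟨hji, hin⟩ := Finset.mem_Icc.mp hi
    exact mul_nonneg (key n i (le_trans h1j hji) hin (by omega))
      (Apos i j h1j hji (le_trans hin hnN)).le
  have hτpos : 0 < t j - t (j - 1) := sub_pos.mpr (tlt (j - 1) j (by omega) hjN)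
  have hdiag : L1coeff ν t j j = (t j - t (j - 1)) ^ p / ((t j - t (j - 1)) * G) := by
    rw [Aval j j h1j le_rfl hjN, sub_self, Real.zero_rpow (ne_of_gt hp0), sub_zero]
  have hle : P n j ≤ 1 / L1coeff ν t j j := (le_div_iff₀ hAjj).mpr hone
  have hGamma : Real.Gamma (2 - ν) = G := by
    rw [hG, show (2 : ℝ) - ν = (1 - ν) + 1 by ring, Real.Gamma_add_one (by linarith)]
  have hinv : 1 / L1coeff ν t j j = Real.Gamma (2 - ν) * (t j - t (j - 1)) ^ ν := by
    rw [hdiag, one_div_div, hGamma,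
      show ν = 1 - p by simp only [hp]; ring, Real.rpow_sub hτpos, Real.rpow_one]
    have hτp : (t j - t (j - 1)) ^ p ≠ 0 :=
      ne_of_gt (Real.rpow_pos_of_pos hτpos p)
    field_simp
    simp only [hp, sub_sub_cancel]
  rw [← hinv]
  exact hle
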